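/- For n ≥ 2, (n+1) T_n^{(r,k)}(x|λ) + n(r - 1/2 - x) T_{n-1}^{(r,k)}(x|λ) + Σ_{l=0}^{n-2} C(n,l) B_{n-l} T_l^{(r,k)}(x|λ) = -(rλn/(1-λ)) T_{n-1}^{(r+1,k)}(x|λ) + Σ_{l=0}^{n} C(n,l) B_{n-l} T_l^{(r,k-1)}(x|λ). -/

import Mathlib

open PowerSeries Finset

/-- e^{xt} as a formal power series. -/
noncomputable def expX (x : ℂ) : PowerSeries ℂ := rescale x (exp ℂ)

/-- 1 - e^{-t} as a formal power series. -/
noncomputable def oneSubExpNeg : PowerSeries ℂ := 1 - rescale (-1) (exp ℂ)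

/-- Li_k(1-e^{-t}) = Σ_{m≥1} (1-e^{-t})^m / m^k as a formal power series. -/
noncomputable def polyLogC (k : ℤ) : PowerSeries ℂ :=
  mk fun n => ∑ m ∈ Finset.Icc 1 n, (coeff n (oneSubExpNeg ^ m)) * ((m : ℂ) ^ k)⁻¹

/-- integer power of a power series (inverse via `PowerSeries.inv`). -/
noncomputable def zpowS (f : PowerSeries ℂ) (r : ℤ) : PowerSeries ℂ :=
  f ^ r.toNat * (f⁻¹) ^ (-r).toNat

/-- (1-λ)/(e^t-λ). -/
noncomputable def feBase (l : ℂ) : PowerSeries ℂ :=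
  C (1 - l) * (exp ℂ - C l)⁻¹

/-- exponential generating function Σ f(n) t^n/n!. -/
noncomputable def GF (f : ℕ → ℂ) : PowerSeries ℂ := mk fun n => f n / n.factorial

/-- Stirling numbers of the second kind: (e^t-1)^m = m! Σ_l S2(l,m) t^l/l!. -/
noncomputable def S2 (n m : ℕ) : ℂ :=
  (n.factorial : ℂ) / (m.factorial : ℂ) * coeff n ((exp ℂ - 1) ^ m)

noncomputable def auxM : PowerSeries ℂ := rescale (-1) (exp ℂ)

lemma Dexp : d⁄dX ℂ (exp ℂ) = exp ℂ := by
  ext n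
  rw [coeff_derivative, coeff_exp, coeff_exp]
  rw [eq_ratCast, eq_ratCast]
  push_cast [Nat.factorial_succ]
  have h2 : ((n:ℂ)+1) ≠ 0 := by
    have := Nat.cast_ne_zero (R := ℂ) |>.mpr (Nat.succ_ne_zero n)
    push_cast at this; exact this
  have h3 : ((n.factorial :ℂ)) ≠ 0 := Nat.cast_ne_zero.mpr (Nat.factorial_ne_zero n)
  field_simp
lemma Drescale (a : ℂ) (f : PowerSeries ℂ) :
    d⁄dX ℂ (rescale a f) = C a * rescale a (d⁄dX ℂ f) := by
  ext n
  rw [coeff_derivative, coeff_rescale, coeff_C_mul, coeff_rescale, coeff_derivative]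
  ring
lemma EM : exp ℂ * auxM = 1 := exp_mul_exp_neg_eq_one (A := ℂ)
lemma DM : d⁄dX ℂ auxM = - auxM := by
  rw [auxM, Drescale, Dexp]
  ext n; simp [coeff_rescale]
lemma g_eq : oneSubExpNeg = 1 - auxM := rfl
lemma Dg : d⁄dX ℂ oneSubExpNeg = auxM := by
  rw [g_eq, map_sub, DM]; simp
lemma DexpX (x : ℂ) : d⁄dX ℂ (expX x) = C x * expX x := by
  rw [expX, Drescale, Dexp]
lemma constg : constantCoeff oneSubExpNeg = 0 := by
  rw [g_eq]; simp [auxM, ← coeff_zero_eq_constantCoeff, coeff_rescale]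
lemma g_pow_coeff (n m : ℕ) (h : n < m) : coeff n (oneSubExpNeg ^ m) = 0 := by
  have hd : (X : PowerSeries ℂ)^m ∣ oneSubExpNeg ^ m :=
    pow_dvd_pow_of_dvd (X_dvd_iff.mpr constg) m
  exact X_pow_dvd_iff.mp hd n h
lemma polyLog_coeff (k : ℤ) (n N : ℕ) (h : n ≤ N) :
    coeff n (polyLogC k) =
      coeff n (∑ m ∈ Finset.Icc 1 N, C (((m:ℂ)^k)⁻¹) * oneSubExpNeg ^ m) := by
  rw [polyLogC, coeff_mk, map_sum]
  simp_rw [coeff_C_mul]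
  rw [Finset.sum_subset (Finset.Icc_subset_Icc_right h)]
  · exact Finset.sum_congr rfl fun m _ => mul_comm _ _
  · intro m hm hm'
    simp only [Finset.mem_Icc] at hm hm'
    rw [g_pow_coeff n m (by omega), zero_mul]

lemma truncS_deriv (k : ℤ) (N : ℕ) :
    oneSubExpNeg * d⁄dX ℂ (∑ m ∈ Finset.Icc 1 N, C (((m:ℂ)^k)⁻¹) * oneSubExpNeg ^ m)
    = auxM * (∑ m ∈ Finset.Icc 1 N, C (((m:ℂ)^(k-1))⁻¹) * oneSubExpNeg ^ m) := by
  rw [map_sum, Finset.mul_sum, Finset.mul_sum]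
  refine Finset.sum_congr rfl fun m hm => ?_
  have hm1 : 1 ≤ m := (Finset.mem_Icc.mp hm).1
  have hmC : (m : ℂ) ≠ 0 := Nat.cast_ne_zero.mpr (by omega)
  have hD : d⁄dX ℂ (C (((m:ℂ)^k)⁻¹) * oneSubExpNeg ^ m)
      = C (((m:ℂ)^k)⁻¹) * (m • (oneSubExpNeg ^ (m-1) * auxM)) := by
    rw [Derivation.leibniz, Derivation.leibniz_pow, derivative_C, Dg]
    simp [smul_eq_mul]
  rw [hD]
  have hpow : oneSubExpNeg * oneSubExpNeg ^ (m-1) = oneSubExpNeg ^ m := by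
    rw [← pow_succ']
    congr 1; omega
  have hc : ((m:ℂ)^(k-1))⁻¹ = (m:ℂ) * ((m:ℂ)^k)⁻¹ := by
    rw [zpow_sub_one₀ hmC, mul_inv, inv_inv]; ring
  rw [hc, map_mul]
  simp only [nsmul_eq_mul]
  rw [map_natCast (C (R := ℂ))]
  push_cast
  calc oneSubExpNeg * (C (((m:ℂ)^k)⁻¹) * ((m : PowerSeries ℂ) * (oneSubExpNeg ^ (m-1) * auxM)))
      = (m : PowerSeries ℂ) * C (((m:ℂ)^k)⁻¹) * auxM * (oneSubExpNeg * oneSubExpNeg ^ (m-1)) := by ring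
    _ = _ := by rw [hpow]; ring

lemma key4 (k : ℤ) :
    oneSubExpNeg * d⁄dX ℂ (polyLogC k) = auxM * polyLogC (k-1) := by
  ext n
  rw [coeff_mul, coeff_mul]
  have h1 : ∀ p ∈ antidiagonal n,
      coeff p.1 oneSubExpNeg * coeff p.2 (d⁄dX ℂ (polyLogC k))
      = coeff p.1 oneSubExpNeg * coeff p.2 (d⁄dX ℂ (∑ m ∈ Finset.Icc 1 (n+1), C (((m:ℂ)^k)⁻¹) * oneSubExpNeg ^ m)) := by
    intro p hp
    have hp2 : p.2 ≤ n := by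
      have := Finset.HasAntidiagonal.mem_antidiagonal.mp hp; omega
    rw [coeff_derivative, coeff_derivative, polyLog_coeff k (p.2+1) (n+1) (by omega)]
  have h2 : ∀ p ∈ antidiagonal n,
      coeff p.1 auxM * coeff p.2 (polyLogC (k-1))
      = coeff p.1 auxM * coeff p.2 (∑ m ∈ Finset.Icc 1 (n+1), C (((m:ℂ)^(k-1))⁻¹) * oneSubExpNeg ^ m) := by
    intro p hp
    have hp2 : p.2 ≤ n := by
      have := Finset.HasAntidiagonal.mem_antidiagonal.mp hp; omega
    rw [polyLog_coeff (k-1) p.2 (n+1) (by omega)]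
  rw [Finset.sum_congr rfl h1, Finset.sum_congr rfl h2, ← coeff_mul, ← coeff_mul,
    truncS_deriv k (n+1)]

lemma zpowS_succ (f : PowerSeries ℂ) (hf : f * f⁻¹ = 1) (r : ℤ) :
    zpowS f (r+1) = f * zpowS f r := by
  unfold zpowS
  rcases le_or_gt 0 r with h|h
  · have h1 : (r+1).toNat = r.toNat + 1 := by omega
    have h2 : (-(r+1)).toNat = 0 := by omega
    have h3 : (-r).toNat = 0 := by omega
    rw [h1, h2, h3]; ring
  · have h1 : (r+1).toNat = 0 := by omega
    have h2 : r.toNat = 0 := by omega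
    have h3 : (-r).toNat = (-(r+1)).toNat + 1 := by omega
    rw [h1, h2, h3]
    have : f * (f ^ 0 * f⁻¹ ^ ((-(r+1)).toNat + 1))
        = (f * f⁻¹) * (f ^ 0 * f⁻¹ ^ ((-(r+1)).toNat)) := by ring
    rw [this, hf, one_mul]

lemma pow_deriv (u : PowerSeries ℂ) (n : ℕ) :
    u * d⁄dX ℂ (u^n) = C (n:ℂ) * (d⁄dX ℂ u * u^n) := by
  cases n with
  | zero => simp
  | succ n =>
    rw [Derivation.leibniz_pow]
    simp only [smul_eq_mul, nsmul_eq_mul]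
    rw [map_natCast (C (R := ℂ))]
    have : u * ((n+1 : ℕ) * (u ^ (n+1-1) * d⁄dX ℂ u))
        = (n+1 : ℕ) * (d⁄dX ℂ u * (u * u ^ n)) := by
      simp only [Nat.add_sub_cancel]; ring
    rw [this, ← pow_succ']

lemma inv_pow_deriv (f : PowerSeries ℂ) (hf : f * f⁻¹ = 1) (n : ℕ) :
    f * d⁄dX ℂ (f⁻¹^n) = -(C (n:ℂ) * (d⁄dX ℂ f * f⁻¹^n)) := by
  have hinv : f * d⁄dX ℂ (f⁻¹) = -(f⁻¹ * d⁄dX ℂ f) := by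
    have h0 : d⁄dX ℂ (f * f⁻¹) = 0 := by rw [hf]; simp
    rw [Derivation.leibniz, smul_eq_mul, smul_eq_mul] at h0
    linear_combination h0
  cases n with
  | zero => simp
  | succ n =>
    rw [Derivation.leibniz_pow]
    simp only [smul_eq_mul, nsmul_eq_mul]
    have e1 : f * ((n+1 : ℕ) * (f⁻¹ ^ (n+1-1) * d⁄dX ℂ (f⁻¹)))
        = (n+1 : ℕ) * (f⁻¹ ^ n * (f * d⁄dX ℂ (f⁻¹))) := by
      simp only [Nat.add_sub_cancel]; ring
    rw [e1, hinv]
    rw [map_natCast (C (R := ℂ))]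
    have : f⁻¹ ^ n * f⁻¹ = f⁻¹ ^ (n+1) := by rw [pow_succ]
    push_cast
    linear_combination ((n:PowerSeries ℂ)+1) * (d⁄dX ℂ f) * this

lemma toNat_cast (r : ℤ) : ((r.toNat : ℂ) - ((-r).toNat : ℂ)) = (r:ℂ) := by
  have h : ((r.toNat : ℤ) - ((-r).toNat : ℤ)) = r := by omega
  calc ((r.toNat : ℂ) - ((-r).toNat : ℂ)) = (((r.toNat : ℤ) - ((-r).toNat : ℤ) : ℤ) : ℂ) := by
        push_cast; ring
    _ = (r:ℂ) := by rw [h]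

lemma f_D_zpow (f : PowerSeries ℂ) (hf : f * f⁻¹ = 1) (r : ℤ) :
    f * d⁄dX ℂ (zpowS f r) = C (r:ℂ) * (d⁄dX ℂ f * zpowS f r) := by
  unfold zpowS
  rw [Derivation.leibniz]
  simp only [smul_eq_mul]
  have e1 : f * (f ^ r.toNat * d⁄dX ℂ (f⁻¹ ^ (-r).toNat) + f⁻¹ ^ (-r).toNat * d⁄dX ℂ (f ^ r.toNat))
      = f ^ r.toNat * (f * d⁄dX ℂ (f⁻¹ ^ (-r).toNat)) + f⁻¹ ^ (-r).toNat * (f * d⁄dX ℂ (f ^ r.toNat)) := by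
    ring
  rw [e1, pow_deriv, inv_pow_deriv f hf]
  rw [← toNat_cast r, map_sub]
  ring

section feB
variable {lam : ℂ} (hlam : lam ≠ 1)
include hlam

lemma h1l : (1:ℂ) - lam ≠ 0 := sub_ne_zero.mpr (Ne.symm hlam)

lemma hv : (exp ℂ - C lam) * (exp ℂ - C lam)⁻¹ = 1 := by
  apply PowerSeries.mul_inv_cancel
  simp only [map_sub, constantCoeff_exp, constantCoeff_C]
  exact h1l hlam

lemma hfinv : feBase lam * (feBase lam)⁻¹ = 1 := by
  apply PowerSeries.mul_inv_cancel
  rw [feBase]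
  simp only [map_mul, constantCoeff_C, constantCoeff_inv, map_sub, constantCoeff_exp]
  rw [mul_inv_cancel₀ (h1l hlam)]
  exact one_ne_zero

lemma H13 : feBase lam * (exp ℂ - C lam) = C (1-lam) := by
  rw [feBase]
  calc C (1 - lam) * (exp ℂ - C lam)⁻¹ * (exp ℂ - C lam)
      = C (1 - lam) * ((exp ℂ - C lam) * (exp ℂ - C lam)⁻¹) := by ring
    _ = C (1-lam) := by rw [hv hlam, mul_one]

lemma H7 : exp ℂ * feBase lam = C (1-lam) + C lam * feBase lam := by
  linear_combination H13 hlam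

lemma H6 : (exp ℂ - C lam) * d⁄dX ℂ (feBase lam) = -(exp ℂ * feBase lam) := by
  have h0 : d⁄dX ℂ (feBase lam * (exp ℂ - C lam)) = 0 := by
    rw [H13 hlam]; simp
  rw [Derivation.leibniz, smul_eq_mul, smul_eq_mul, map_sub, Dexp, derivative_C, sub_zero] at h0
  linear_combination h0

end feB

lemma E1' {lam : ℂ} (hlam : lam ≠ 1) (r : ℤ) :
    d⁄dX ℂ (zpowS (feBase lam) r)
      = -(C (r:ℂ)) * zpowS (feBase lam) r
        - C ((r:ℂ)*lam/(1-lam)) * (feBase lam * zpowS (feBase lam) r) := by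
  set f := feBase lam with hfdef
  set h := zpowS (feBase lam) r with hhdef
  have hf : f * f⁻¹ = 1 := hfinv hlam
  have hC : (C (1-lam)) ≠ 0 := by
    intro hc
    have := congrArg (constantCoeff) hc
    simp only [constantCoeff_C, map_zero] at this
    exact h1l hlam this
  have key : C (1-lam) * d⁄dX ℂ h
      = -(C (r:ℂ) * C (1-lam) * h) - C (r:ℂ) * C lam * (f*h) := by
    linear_combination (exp ℂ - C lam) * f_D_zpow f hf r
      + C (r:ℂ) * h * H6 hlam - C (r:ℂ) * h * H7 hlam - (d⁄dX ℂ h) * H13 hlam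
  have hc2 : C (1-lam) * C ((r:ℂ)*lam/(1-lam)) = C (r:ℂ) * C lam := by
    rw [← map_mul, ← map_mul]
    congr 1
    field_simp [sub_ne_zero.mpr (Ne.symm hlam)]
  apply mul_left_cancel₀ hC
  linear_combination key + (f*h) * hc2

lemma hgne : oneSubExpNeg ≠ 0 := by
  intro hc
  have h := congrArg (coeff 1) hc
  rw [g_eq] at h
  simp only [map_sub, coeff_one, auxM, coeff_rescale, coeff_exp, map_zero] at h
  rw [eq_ratCast] at h
  norm_num [Nat.factorial] at h

lemma hEne : exp ℂ - 1 ≠ 0 := by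
  intro hc
  have h := congrArg (coeff 1) hc
  simp only [map_sub, coeff_one, coeff_exp, map_zero] at h
  rw [eq_ratCast] at h
  norm_num [Nat.factorial] at h

lemma star {lam : ℂ} (hlam : lam ≠ 1) (r k : ℤ) (x : ℂ) (A A' A'' : PowerSeries ℂ)
    (hA : oneSubExpNeg * A = zpowS (feBase lam) r * polyLogC k * expX x)
    (hA' : oneSubExpNeg * A' = zpowS (feBase lam) (r+1) * polyLogC k * expX x)
    (hA'' : oneSubExpNeg * A'' = zpowS (feBase lam) r * polyLogC (k-1) * expX x) :
    X * d⁄dX ℂ A + (C (r:ℂ) - C x) * (X * A) + bernoulliPowerSeries ℂ * A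
      = -(C ((r:ℂ)*lam/(1-lam))) * (X * A') + bernoulliPowerSeries ℂ * A'' := by
  have hfmul : feBase lam * (feBase lam)⁻¹ = 1 := hfinv hlam
  have hA2 : oneSubExpNeg * A' = feBase lam * zpowS (feBase lam) r * polyLogC k * expX x := by
    rw [hA', zpowS_succ _ hfmul]
  have h4 := key4 k
  have he1 := E1' hlam r
  have h9 := EM
  have h10 := bernoulliPowerSeries_mul_exp_sub_one ℂ
  have hg := g_eq
  have h11 : oneSubExpNeg * d⁄dX ℂ A + A * auxM
      = d⁄dX ℂ (zpowS (feBase lam) r) * (polyLogC k * expX x)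
        + zpowS (feBase lam) r * (d⁄dX ℂ (polyLogC k) * expX x)
        + C x * (zpowS (feBase lam) r * (polyLogC k * expX x)) := by
    have h0 := congrArg (d⁄dX ℂ) hA
    simp only [Derivation.leibniz, smul_eq_mul, Dg, DexpX] at h0
    linear_combination h0
  have hW : (oneSubExpNeg^2 * (exp ℂ - 1)) ≠ 0 :=
    mul_ne_zero (pow_ne_zero 2 hgne) hEne
  apply mul_left_cancel₀ hW
  linear_combination
    (X*(exp ℂ - 1)*oneSubExpNeg) * h11
    + (X*(exp ℂ - 1)*(zpowS (feBase lam) r)*(expX x)) * h4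
    + (X*(exp ℂ - 1)*oneSubExpNeg*(polyLogC k * expX x)) * he1
    + (oneSubExpNeg^2*(A - A'')) * h10
    + ((C (r:ℂ) - C x)*X*(exp ℂ - 1)*oneSubExpNeg + X*oneSubExpNeg - X*(exp ℂ - 1)*auxM) * hA
    + (C ((r:ℂ)*lam/(1-lam))*X*(exp ℂ - 1)*oneSubExpNeg) * hA2
    - (X*oneSubExpNeg) * hA''
    + (X*(zpowS (feBase lam) r * polyLogC (k-1) * expX x)
        - X*(zpowS (feBase lam) r * polyLogC k * expX x)) * h9
    + (X*(zpowS (feBase lam) r * polyLogC k * expX x)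
        - X*(zpowS (feBase lam) r * polyLogC (k-1) * expX x)) * hg


lemma bern_mul_coeff (f : ℕ → ℂ) (n : ℕ) :
    (n.factorial : ℂ) * coeff n (bernoulliPowerSeries ℂ * GF f)
      = ∑ l ∈ range (n+1), (n.choose l : ℂ) * ((bernoulli (n - l) : ℚ) : ℂ) * f l := by
  rw [coeff_mul]
  rw [← Finset.Nat.sum_antidiagonal_swap
        (f := fun p => coeff p.1 (bernoulliPowerSeries ℂ) * coeff p.2 (GF f))]
  simp only [Prod.fst_swap, Prod.snd_swap]
  rw [Finset.Nat.sum_antidiagonal_eq_sum_range_succ_mk, Finset.mul_sum]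
  refine Finset.sum_congr rfl fun l hl => ?_
  have hl' : l ≤ n := Nat.lt_succ_iff.mp (mem_range.mp hl)
  rw [bernoulliPowerSeries, coeff_mk, GF, coeff_mk, eq_ratCast]
  push_cast
  rw [Nat.cast_choose ℂ hl']
  have h1 : ((l.factorial : ℂ)) ≠ 0 := Nat.cast_ne_zero.mpr (Nat.factorial_ne_zero l)
  have h2 : (((n-l).factorial : ℂ)) ≠ 0 := Nat.cast_ne_zero.mpr (Nat.factorial_ne_zero (n-l))
  field_simp

lemma coeff_X_mul' (φ : PowerSeries ℂ) (m : ℕ) :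
    coeff (m+2) (X * φ) = coeff (m+1) φ := by
  have h : m + 2 = (m+1) + 1 := rfl
  rw [h, coeff_succ_X_mul]

theorem stmt7 (lam : ℂ) (hlam : lam ≠ 1) (r k : ℤ) (T T' T'' : ℕ → ℂ → ℂ)
    (hT : ∀ x : ℂ, oneSubExpNeg * GF (fun n => T n x)
        = zpowS (feBase lam) (r) * polyLogC (k) * expX x)
    (hT' : ∀ x : ℂ, oneSubExpNeg * GF (fun n => T' n x)
        = zpowS (feBase lam) (r + 1) * polyLogC (k) * expX x)
    (hT'' : ∀ x : ℂ, oneSubExpNeg * GF (fun n => T'' n x)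
        = zpowS (feBase lam) (r) * polyLogC (k - 1) * expX x) :
    ∀ (n : ℕ), 2 ≤ n → ∀ (x : ℂ),
      ((n : ℂ) + 1) * T n x + (n : ℂ) * ((r : ℂ) - 1 / 2 - x) * T (n - 1) x +
        ∑ l ∈ range (n - 1), (n.choose l : ℂ) * ((bernoulli (n - l) : ℚ) : ℂ) * T l x
      = -((r : ℂ) * lam * (n : ℂ) / (1 - lam)) * T' (n - 1) x +
        ∑ l ∈ range (n + 1), (n.choose l : ℂ) * ((bernoulli (n - l) : ℚ) : ℂ) * T'' l x := by
  intro n hn x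
  obtain ⟨m, rfl⟩ : ∃ m, n = m + 2 := ⟨n - 2, by omega⟩
  have S := star hlam r k x (GF fun j => T j x) (GF fun j => T' j x) (GF fun j => T'' j x)
    (hT x) (hT' x) (hT'' x)
  have Hc := congrArg (coeff (m+2)) S
  simp only [map_add, neg_mul, map_neg] at Hc
  have hfne : (((m+2).factorial : ℂ)) ≠ 0 := Nat.cast_ne_zero.mpr (Nat.factorial_ne_zero _)
  have hfne1 : (((m+1).factorial : ℂ)) ≠ 0 := Nat.cast_ne_zero.mpr (Nat.factorial_ne_zero _)
  have hfs : (((m+2).factorial : ℂ)) = ((m:ℂ)+2) * ((m+1).factorial : ℂ) := by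
    rw [Nat.factorial_succ]; push_cast; ring
  have E1 : ((m+2).factorial : ℂ) * coeff (m+2) (X * d⁄dX ℂ (GF fun j => T j x))
      = ((m:ℂ)+2) * T (m+2) x := by
    rw [coeff_X_mul', coeff_derivative, GF, coeff_mk]
    have h : m + 1 + 1 = m + 2 := rfl
    rw [h]
    field_simp
    push_cast
    ring
  have E2 : ((m+2).factorial : ℂ) * coeff (m+2)
        ((C (r:ℂ) - C x) * (X * GF fun j => T j x))
      = ((m:ℂ)+2) * ((r:ℂ) - x) * T (m+1) x := by
    rw [← map_sub (C (R := ℂ)), coeff_C_mul, coeff_X_mul', GF, coeff_mk, hfs]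
    field_simp
  have E3 := bern_mul_coeff (fun j => T j x) (m+2)
  have E3' : ((m+2).factorial : ℂ) * coeff (m+2)
        (bernoulliPowerSeries ℂ * GF fun j => T j x)
      = ∑ l ∈ range (m+2+1), ((m+2).choose l : ℂ) * ((bernoulli (m+2 - l) : ℚ) : ℂ) * T l x := E3
  have E4 : ((m+2).factorial : ℂ) * coeff (m+2)
        ((C ((r:ℂ)*lam/(1-lam))) * (X * GF fun j => T' j x))
      = ((r:ℂ)*lam/(1-lam)) * (((m:ℂ)+2) * T' (m+1) x) := by
    rw [coeff_C_mul, coeff_X_mul', GF, coeff_mk, hfs]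
    have hdm : T' (m+1) x / (((m+1).factorial : ℂ)) * (((m+1).factorial : ℂ)) = T' (m+1) x :=
      div_mul_cancel₀ _ hfne1
    linear_combination ((r:ℂ)*lam/(1-lam)) * ((m:ℂ)+2) * hdm
  have E5 : ((m+2).factorial : ℂ) * coeff (m+2)
        (bernoulliPowerSeries ℂ * GF fun j => T'' j x)
      = ∑ l ∈ range (m+2+1), ((m+2).choose l : ℂ) * ((bernoulli (m+2 - l) : ℚ) : ℂ) * T'' l x :=
    bern_mul_coeff (fun j => T'' j x) (m+2)
  have hsplit : (∑ l ∈ range (m+2+1), ((m+2).choose l : ℂ) * ((bernoulli (m+2 - l) : ℚ) : ℂ) * T l x)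
      = (∑ l ∈ range (m+1), ((m+2).choose l : ℂ) * ((bernoulli (m+2 - l) : ℚ) : ℂ) * T l x)
        + ((m:ℂ)+2) * (-(1/2)) * T (m+1) x + T (m+2) x := by
    have h1 : m+2+1 = (m+1)+1+1 := rfl
    rw [h1, sum_range_succ, sum_range_succ]
    have hc1 : (m+2).choose (m+2) = 1 := Nat.choose_self _
    have hc2 : (m+2).choose (m+1) = m+2 := by
      have := Nat.choose_succ_self_right (m+1)
      simpa using this
    have hb0 : m+2 - (m+2) = 0 := by omega
    have hb1 : m+2 - (m+1) = 1 := by omega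
    rw [show (m+1)+1 = m+2 from rfl, hc1, hc2, hb0, hb1, bernoulli_one, bernoulli_zero]
    push_cast
    ring
  have Hc2 := congrArg (fun z => ((m+2).factorial : ℂ) * z) Hc
  simp only [mul_add, mul_neg] at Hc2
  rw [E1, E2, E3', E4, E5] at Hc2
  push_cast
  linear_combination Hc2 - hsplit
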